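/- Let G be a group, H ≤ G a subgroup with a group topology, and define the open preserver OP_G(H) as the set of g ∈ G such that for every identity neighbourhood O in H there exists an identity neighbourhood U in H with U ⊆ gOg⁻¹ ∩ g⁻¹Og. Then OP_G(H) is a subgroup of G, and the topology of H extends to a group topology on OP_G(H) in which H is open with its given topology. -/

import Mathlib

open scoped Pointwise

/-- An element `g` of `G` preserves the opens of the subgroup `H` (with group topology `τH`):
for every identity neighbourhood `O` of `H` there is an identity neighbourhood `U` of `H`
with `U ⊆ gOg⁻¹ ∩ g⁻¹Og`. -/
def PreservesOpens {G : Type*} [Group G] (H : Subgroup G) (τH : TopologicalSpace H)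
    (g : G) : Prop :=
  ∀ O ∈ @nhds H τH 1, ∃ U ∈ @nhds H τH 1,
    (((↑) : H → G) '' U) ⊆
      ((fun x => g * x * g⁻¹) '' (((↑) : H → G) '' O)) ∩
      ((fun x => g⁻¹ * x * g) '' (((↑) : H → G) '' O))

section Aux

variable {G : Type*} [Group G]

lemma conj_preimage_nhds_one {H : Type*} [Group H] [TopologicalSpace H] [IsTopologicalGroup H]
    (c : H) {O : Set H} (hO : O ∈ nhds 1) : (fun x => c * x * c⁻¹) ⁻¹' O ∈ nhds (1 : H) := by
  have hc : Continuous fun x : H => c * x * c⁻¹ :=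
    (continuous_const.mul continuous_id).mul continuous_const
  have ht : Filter.Tendsto (fun x : H => c * x * c⁻¹) (nhds 1) (nhds 1) := by
    simpa using hc.tendsto 1
  exact ht hO

lemma conj_conj (a b : G) (s : Set G) :
    (fun x => a * x * a⁻¹) '' ((fun x => b * x * b⁻¹) '' s)
      = (fun x => (a * b) * x * (a * b)⁻¹) '' s := by
  rw [Set.image_image]
  apply Set.image_congr'
  intro x
  group

variable (H : Subgroup G) [τH : TopologicalSpace H] [IsTopologicalGroup H]

lemma po_one : PreservesOpens H τH 1 := by
  intro O hO
  refine ⟨O, hO, ?_⟩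
  intro x hx
  constructor <;> exact ⟨x, hx, by group⟩

lemma po_mul {a b : G} (ha : PreservesOpens H τH a) (hb : PreservesOpens H τH b) :
    PreservesOpens H τH (a * b) := by
  intro O hO
  obtain ⟨U₂, hU₂, hU₂s⟩ := hb O hO
  obtain ⟨U₁, hU₁, hU₁s⟩ := ha U₂ hU₂
  obtain ⟨V₁, hV₁, hV₁s⟩ := ha O hO
  obtain ⟨V₂, hV₂, hV₂s⟩ := hb V₁ hV₁
  refine ⟨U₁ ∩ V₂, Filter.inter_mem hU₁ hV₂, ?_⟩
  rintro x ⟨u, hu, rfl⟩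
  constructor
  · have h1 : (u : G) ∈ (fun x => a * x * a⁻¹) '' (((↑) : H → G) '' U₂) :=
      (hU₁s ⟨u, hu.1, rfl⟩).1
    have h2 : (fun x => a * x * a⁻¹) '' (((↑) : H → G) '' U₂) ⊆
        (fun x => a * x * a⁻¹) '' ((fun x => b * x * b⁻¹) '' (((↑) : H → G) '' O)) :=
      Set.image_mono  (fun y hy => (hU₂s hy).1)
    have := h2 h1
    rwa [conj_conj] at this
  · have h1 : (u : G) ∈ (fun x => b⁻¹ * x * b) '' (((↑) : H → G) '' V₁) :=
      (hV₂s ⟨u, hu.2, rfl⟩).2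
    have h2 : (fun x => b⁻¹ * x * b) '' (((↑) : H → G) '' V₁) ⊆
        (fun x => b⁻¹ * x * b) '' ((fun x => a⁻¹ * x * a) '' (((↑) : H → G) '' O)) :=
      Set.image_mono  (fun y hy => (hV₁s hy).2)
    have := h2 h1
    have e : (fun x => b⁻¹ * x * b) '' ((fun x => a⁻¹ * x * a) '' (((↑) : H → G) '' O))
        = (fun x => (a * b)⁻¹ * x * (a * b)) '' (((↑) : H → G) '' O) := by
      have := conj_conj b⁻¹ a⁻¹ (((↑) : H → G) '' O)
      simpa [mul_inv_rev] using this
    rwa [e] at this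

lemma po_inv {a : G} (ha : PreservesOpens H τH a) : PreservesOpens H τH a⁻¹ := by
  intro O hO
  obtain ⟨U, hU, hUs⟩ := ha O hO
  refine ⟨U, hU, fun x hx => ⟨?_, ?_⟩⟩
  · have := (hUs hx).2
    simpa [inv_inv] using this
  · have := (hUs hx).1
    simpa [inv_inv] using this

lemma po_of_mem {h : G} (hh : h ∈ H) : PreservesOpens H τH h := by
  intro O hO
  refine ⟨(fun x => (⟨h, hh⟩ : H)⁻¹ * x * (⟨h, hh⟩ : H)) ⁻¹' O ∩
          (fun x => (⟨h, hh⟩ : H) * x * (⟨h, hh⟩ : H)⁻¹) ⁻¹' O, ?_, ?_⟩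
  · refine Filter.inter_mem ?_ (conj_preimage_nhds_one (⟨h, hh⟩ : H) hO)
    simpa using conj_preimage_nhds_one ((⟨h, hh⟩ : H)⁻¹) hO
  · rintro x ⟨u, hu, rfl⟩
    constructor
    · refine ⟨((⟨h, hh⟩ : H)⁻¹ * u * (⟨h, hh⟩ : H) : H), ⟨_, hu.1, rfl⟩, ?_⟩
      push_cast
      group
    · refine ⟨((⟨h, hh⟩ : H) * u * (⟨h, hh⟩ : H)⁻¹ : H), ⟨_, hu.2, rfl⟩, ?_⟩
      push_cast
      group

end Aux

/-- **The open preserver is a subgroup and the topology extends to it.**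
Given a group `G`, a subgroup `H` with a group topology, the set `OP_G(H)` of elements of `G`
preserving the opens of `H` forms a subgroup `K` of `G` containing `H`, and there is a group
topology on `K` in which (the image of) `H` is open and carries its original topology. -/
theorem open_preserver_subgroup_and_extension {G : Type*} [Group G] (H : Subgroup G)
    (τH : TopologicalSpace H) (hτH : @IsTopologicalGroup H τH _) :
    ∃ K : Subgroup G, (K : Set G) = {g : G | PreservesOpens H τH g} ∧
      ∃ hHK : H ≤ K, ∃ τK : TopologicalSpace K, @IsTopologicalGroup K τK _ ∧
        @IsOpen K τK (Set.range (Subgroup.inclusion hHK)) ∧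
        TopologicalSpace.induced (Subgroup.inclusion hHK) τK = τH := by
  letI := τH
  haveI := hτH
  set K : Subgroup G :=
    { carrier := {g : G | PreservesOpens H τH g}
      one_mem' := po_one H
      mul_mem' := fun ha hb => po_mul H ha hb
      inv_mem' := fun ha => po_inv H ha } with hKdef
  have hHK : H ≤ K := fun h hh => po_of_mem H hh
  set j : H →* K := Subgroup.inclusion hHK with hjdef
  have hj : Function.Injective j := Subgroup.inclusion_injective hHK
  -- group filter basis on K
  set B : GroupFilterBasis K :=
    { sets := {s : Set K | ∃ V ∈ nhds (1 : H), s = j '' V}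
      nonempty := ⟨j '' Set.univ, Set.univ, Filter.univ_mem, rfl⟩
      inter_sets := by
        rintro _ _ ⟨V₁, hV₁, rfl⟩ ⟨V₂, hV₂, rfl⟩
        exact ⟨j '' (V₁ ∩ V₂), ⟨V₁ ∩ V₂, Filter.inter_mem hV₁ hV₂, rfl⟩,
          by rw [Set.image_inter hj]⟩
      one' := by
        rintro _ ⟨V, hV, rfl⟩
        exact ⟨1, mem_of_mem_nhds hV, map_one j⟩
      mul' := by
        rintro _ ⟨V, hV, rfl⟩
        obtain ⟨W, hW, hWs⟩ := exists_nhds_one_split hV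
        refine ⟨j '' W, ⟨W, hW, rfl⟩, ?_⟩
        rintro x hx
        rw [Set.mem_mul] at hx
        obtain ⟨_, ⟨v, hv, rfl⟩, _, ⟨w, hw, rfl⟩, rfl⟩ := hx
        exact ⟨v * w, hWs v hv w hw, map_mul j v w⟩
      inv' := by
        rintro _ ⟨V, hV, rfl⟩
        refine ⟨j '' V⁻¹, ⟨V⁻¹, inv_mem_nhds_one H hV, rfl⟩, ?_⟩
        rintro _ ⟨v, hv, rfl⟩
        exact ⟨v⁻¹, hv, (map_inv j v).symm⟩
      conj' := by
        rintro x₀ _ ⟨V, hV, rfl⟩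
        have hpo : PreservesOpens H τH (x₀ : G) := x₀.2
        obtain ⟨W, hW, hWs⟩ := hpo V hV
        refine ⟨j '' W, ⟨W, hW, rfl⟩, ?_⟩
        rintro _ ⟨w, hw, rfl⟩
        have h2 : (w : G) ∈ (fun x => (x₀ : G)⁻¹ * x * (x₀ : G)) '' (((↑) : H → G) '' V) :=
          (hWs ⟨w, hw, rfl⟩).2
        obtain ⟨_, ⟨v, hv, rfl⟩, hvw⟩ := h2
        have heq : x₀ * j w * x₀⁻¹ = j v := by
          apply Subtype.ext
          show (x₀ : G) * (w : G) * (x₀ : G)⁻¹ = (v : G)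
          rw [← hvw]
          group
        show x₀ * j w * x₀⁻¹ ∈ j '' V
        rw [heq]
        exact ⟨v, hv, rfl⟩ } with hBdef
  letI τK : TopologicalSpace K := B.topology
  haveI : IsTopologicalGroup K := B.isTopologicalGroup
  refine ⟨K, rfl, hHK, τK, inferInstance, ?_, ?_⟩
  · -- range of the inclusion is open
    rw [isOpen_iff_mem_nhds]
    rintro _ ⟨h, rfl⟩
    rw [(B.nhds_hasBasis (j h)).mem_iff]
    refine ⟨j '' Set.univ, ⟨Set.univ, Filter.univ_mem, rfl⟩, ?_⟩
    rintro _ ⟨_, ⟨v, -, rfl⟩, rfl⟩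
    exact ⟨h * v, (map_mul j h v).symm⟩
  · -- the induced topology is τH
    haveI hτ' : @IsTopologicalGroup H (TopologicalSpace.induced (⇑j) τK) _ :=
      topologicalGroup_induced j
    refine IsTopologicalGroup.ext hτ' hτH ?_
    have hn : @nhds H (TopologicalSpace.induced (⇑j) τK) 1
        = Filter.comap (⇑j) (nhds (j 1)) := nhds_induced (⇑j) 1
    have h1 : (j 1 : K) = 1 := map_one j
    rw [show TopologicalSpace.induced (Subgroup.inclusion hHK) τK
        = TopologicalSpace.induced (⇑j) τK from rfl, hn, h1, B.nhds_one_eq]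
    have hbas := (B.toFilterBasis.hasBasis).comap (⇑j)
    apply le_antisymm
    · intro s hs
      rw [hbas.mem_iff]
      refine ⟨j '' s, ⟨s, hs, rfl⟩, ?_⟩
      simp [Set.preimage_image_eq s hj]
    · intro s hs
      rw [hbas.mem_iff] at hs
      obtain ⟨_, ⟨V, hV, rfl⟩, hsub⟩ := hs
      simp only [id_eq, Set.preimage_image_eq V hj] at hsub
      exact Filter.mem_of_superset hV hsub
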